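/- Let $I \subseteq (0,\infty)$ be a bounded interval and $n \ge 3$. Then there is a constant $C$ depending only on $n$ (independent of $I$ and $V$) such that for any $V \in H^1(I)$, $\sup_{s \in I} s^{n/2-1}|V(s)| \le C \left( \left(\int_I s^{n-1}|V'(s)|^2\,ds\right)^{1/2} + |I|^{-1} \left(\int_I s^{n-1}|V(s)|^2\,ds\right)^{1/2} \right)$. -/

import Mathlib

open MeasureTheory Set

private lemma pow_split1 {n : ℕ} (hn : 3 ≤ n) (x : ℝ) : x^(n-1) = x^(n-3)*x^2 := by
  rw [← pow_add]; congr 1; omega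

private lemma pow_split2 {n : ℕ} (hn : 3 ≤ n) (x : ℝ) : x^(n-2) = x^(n-3)*x := by
  rw [← pow_succ]; congr 1; omega

private lemma aux_amgm {n : ℕ} (hn : 3 ≤ n) (x u v : ℝ) (hx : 0 ≤ x) :
    2*(x^(n-2)*|v*u|) ≤ x^(n-1)*u^2 + x^(n-3)*v^2 := by
  rw [pow_split1 hn, pow_split2 hn, abs_mul, ← sq_abs u, ← sq_abs v]
  have h3 : (0:ℝ) ≤ x^(n-3) := pow_nonneg hx _
  nlinarith [mul_nonneg h3 (sq_nonneg (x*|u| - |v|)),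
    abs_nonneg u, abs_nonneg v,
    mul_nonneg (mul_nonneg h3 hx) (mul_nonneg (abs_nonneg v) (abs_nonneg u))]

private lemma aux_keylow {n : ℕ} (hn : 3 ≤ n) (x u w : ℝ) (hx : 0 ≤ x) :
    (1/2)*(x^(n-3)*u^2) ≤ ((n:ℝ)-2)*x^(n-3)*u^2 + 2*x^(n-2)*(u*w) + 2*(x^(n-1)*w^2) := by
  have h3 : (1:ℝ) ≤ (n:ℝ)-2 := by
    have : (3:ℝ) ≤ (n:ℝ) := by exact_mod_cast hn
    linarith
  rw [pow_split1 hn, pow_split2 hn]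
  nlinarith [mul_nonneg (pow_nonneg hx (n-3)) (sq_nonneg (u + 2*x*w)),
    mul_nonneg (mul_nonneg (by linarith : (0:ℝ) ≤ (n:ℝ)-2-1) (pow_nonneg hx (n-3))) (sq_nonneg u)]

private lemma aux_wt1 {n : ℕ} (hn : 3 ≤ n) (L x v : ℝ) (hL : 0 < L) (hx : L/4 ≤ x) (hx0 : 0 < x) :
    x^(n-3)*v^2 ≤ 16/L^2*(x^(n-1)*v^2) := by
  rw [pow_split1 hn, div_mul_eq_mul_div, le_div_iff₀ (by positivity)]
  have h1 : (0:ℝ) ≤ x^(n-3)*v^2 := by positivity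
  have h2 : L^2 ≤ 16*x^2 := by nlinarith
  nlinarith [mul_le_mul_of_nonneg_left h2 h1]

private lemma aux_wt2 {n : ℕ} (hn : 3 ≤ n) (L x v : ℝ) (hL : 0 < L) (hx : L/4 ≤ x) (hx0 : 0 < x) :
    x^(n-2)*v^2 ≤ 4/L*(x^(n-1)*v^2) := by
  rw [pow_split1 hn, pow_split2 hn, div_mul_eq_mul_div, le_div_iff₀ (by positivity)]
  have h1 : (0:ℝ) ≤ x^(n-3)*v^2 := by positivity
  have h2 : L ≤ 4*x := by linarith
  nlinarith [mul_le_mul_of_nonneg_left h2 h1, mul_nonneg (mul_nonneg h1 hx0.le) hx0.le]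

private lemma aux_wt3 {n : ℕ} (hn : 3 ≤ n) (s x v : ℝ) (hx0 : 0 < x) (hxs : x ≤ 2*s) :
    x^(n-2)*v^2 ≤ 2*s*(x^(n-3)*v^2) := by
  rw [pow_split2 hn]
  nlinarith [mul_nonneg (pow_nonneg hx0.le (n-3)) (sq_nonneg v)]

private lemma avg_bound (G G' : ℝ → ℝ) {c d : ℝ} (hcd : c < d)
    (hG : ∀ x ∈ Icc c d, HasDerivAt G (G' x) x)
    (hG'i : IntegrableOn G' (Icc c d)) {s : ℝ} (hs : s ∈ Icc c d) :
    G s ≤ (d - c)⁻¹ * (∫ t in Ioo c d, G t) + ∫ x in Ioo c d, |G' x| := by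
  have hGc : ContinuousOn G (Icc c d) := fun x hx => (hG x hx).continuousAt.continuousWithinAt
  have hGint : IntegrableOn G (Ioo c d) :=
    (hGc.integrableOn_Icc).mono_set Ioo_subset_Icc_self
  have habs : IntegrableOn (fun x => |G' x|) (Icc c d) := hG'i.abs
  have hIcc : (∫ x in Icc c d, |G' x|) = ∫ x in Ioo c d, |G' x| := integral_Icc_eq_integral_Ioo
  set M : ℝ := ∫ x in Icc c d, |G' x| with hM
  have key : ∀ t ∈ Icc c d, G s ≤ G t + M := by
    intro t ht
    have hsub : uIcc t s ⊆ Icc c d := uIcc_subset_Icc ht hs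
    have hii : IntervalIntegrable G' volume t s := by
      rw [intervalIntegrable_iff]
      exact hG'i.mono_set fun x hx => hsub (uIoc_subset_uIcc hx)
    have hftc : ∫ x in t..s, G' x = G s - G t :=
      intervalIntegral.integral_eq_sub_of_hasDerivAt (fun x hx => hG x (hsub hx)) hii
    have hb : G s - G t ≤ M := by
      rw [← hftc]
      calc ∫ x in t..s, G' x ≤ |∫ x in t..s, G' x| := le_abs_self _
        _ ≤ ∫ x in uIoc t s, |G' x| := by
            have := intervalIntegral.norm_integral_le_integral_norm_uIoc (f := G') (a := t) (b := s) (μ := volume)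
            simpa [Real.norm_eq_abs] using this
        _ ≤ M := by
            refine setIntegral_mono_set habs (Filter.Eventually.of_forall fun x => abs_nonneg _) ?_
            exact HasSubset.Subset.eventuallyLE fun x hx => hsub (uIoc_subset_uIcc hx)
    linarith
  have hvol : volume.real (Ioo c d) = d - c := by
    rw [measureReal_def, Real.volume_Ioo, ENNReal.toReal_ofReal (by linarith)]
  have hMconst : IntegrableOn (fun _ : ℝ => M) (Ioo c d) := by
    refine integrableOn_const ?_
    rw [Real.volume_Ioo]; exact ENNReal.ofReal_ne_top
  have hconst : IntegrableOn (fun _ : ℝ => G s) (Ioo c d) := by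
    refine integrableOn_const ?_
    rw [Real.volume_Ioo]; exact ENNReal.ofReal_ne_top
  have hGM : IntegrableOn (fun t => G t + M) (Ioo c d) := hGint.add hMconst
  have hmono := setIntegral_mono_on hconst hGM measurableSet_Ioo
    (fun t ht => key t (Ioo_subset_Icc_self ht))
  have hsplit : ∫ t in Ioo c d, (G t + M) = (∫ t in Ioo c d, G t) + (d-c)*M := by
    rw [integral_add hGint hMconst, setIntegral_const, hvol, smul_eq_mul]
  rw [setIntegral_const, hvol, smul_eq_mul, hsplit] at hmono
  have hdc : 0 < d - c := by linarith
  have h2 : G s ≤ ((∫ t in Ioo c d, G t) + (d-c)*M)/(d-c) := by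
    rw [le_div_iff₀ hdc]; linarith
  have h3 : ((∫ t in Ioo c d, G t) + (d-c)*M)/(d-c) = (d-c)⁻¹*(∫ t in Ioo c d, G t) + M := by
    field_simp
  rw [h3] at h2
  rw [← hIcc]
  exact h2

set_option maxHeartbeats 2000000 in
private lemma core (n : ℕ) (hn : 3 ≤ n) (a b : ℝ) (ha : 0 < a) (hab : a < b)
    (V V' : ℝ → ℝ)
    (hV : ∀ x ∈ Icc a b, HasDerivAt V (V' x) x)
    (hA : IntegrableOn (fun s => s ^ (n - 1 : ℕ) * (V' s) ^ 2) (Ioo a b))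
    (hB : IntegrableOn (fun s => s ^ (n - 1 : ℕ) * (V s) ^ 2) (Ioo a b)) :
    ∀ s ∈ Icc a b, s^(n-2) * (V s)^2 ≤
      (32*(n:ℝ)^2+96*(n:ℝ)+19) * ((∫ x in Ioo a b, x ^ (n - 1 : ℕ) * (V' x) ^ 2)
        + (b-a)⁻¹*(b-a)⁻¹ * (∫ x in Ioo a b, x ^ (n - 1 : ℕ) * (V x) ^ 2)) := by
  have hn3 : (3:ℝ) ≤ (n:ℝ) := by exact_mod_cast hn
  have hL : 0 < b - a := by linarith
  have hVc : ContinuousOn V (Icc a b) := fun x hx => (hV x hx).continuousAt.continuousWithinAt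
  have hVm : AEStronglyMeasurable V (volume.restrict (Ioo a b)) :=
    (hVc.mono Ioo_subset_Icc_self).aestronglyMeasurable measurableSet_Ioo
  have hV'm : AEStronglyMeasurable V' (volume.restrict (Ioo a b)) := by
    have hd : ∀ x ∈ Ioo a b, deriv V x = V' x := fun x hx =>
      (hV x (Ioo_subset_Icc_self hx)).deriv
    refine (measurable_deriv V).aestronglyMeasurable.congr ?_
    rw [Filter.EventuallyEq, ae_restrict_iff' measurableSet_Ioo]
    exact Filter.Eventually.of_forall hd
  have hV2m : AEStronglyMeasurable (fun x => (V x)^2) (volume.restrict (Ioo a b)) := by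
    refine (hVm.mul hVm).congr (Filter.Eventually.of_forall fun x => ?_)
    exact (pow_two (V x)).symm
  -- integrability of the low-weight quantity q2 = x^(n-3) V^2
  have hq2m : AEStronglyMeasurable (fun x => x^(n-3)*(V x)^2) (volume.restrict (Ioo a b)) :=
    (continuous_pow (n-3)).aestronglyMeasurable.mul hV2m
  have hq2int : IntegrableOn (fun x => x^(n-3)*(V x)^2) (Ioo a b) := by
    refine Integrable.mono' (hB.const_mul (a⁻¹*a⁻¹)) hq2m ?_
    rw [ae_restrict_iff' measurableSet_Ioo]
    refine Filter.Eventually.of_forall fun x hx => ?_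
    have hx0 : 0 < x := lt_trans ha hx.1
    rw [Real.norm_eq_abs, abs_of_nonneg (by positivity), pow_split1 hn]
    have h2 : a^2 ≤ x^2 := by nlinarith [hx.1]
    have h1 : (0:ℝ) ≤ x^(n-3)*(V x)^2 := by positivity
    calc x^(n-3)*(V x)^2 = a⁻¹*a⁻¹*(a^2*(x^(n-3)*(V x)^2)) := by field_simp
      _ ≤ a⁻¹*a⁻¹*(x^2*(x^(n-3)*(V x)^2)) := by
          refine mul_le_mul_of_nonneg_left ?_ (by positivity)
          exact mul_le_mul_of_nonneg_right h2 h1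
      _ = a⁻¹*a⁻¹*(x^(n-3)*x^2*(V x)^2) := by ring
  -- the derivative of F = x^(n-2) V^2
  have hFD : ∀ x ∈ Icc a b, HasDerivAt (fun y => y^(n-2)*(V y)^2)
      (((n:ℝ)-2)*x^(n-3)*(V x)^2 + 2*x^(n-2)*(V x*V' x)) x := by
    intro x hx
    have h1 := hasDerivAt_pow (n-2) x
    have h2 := (hV x hx).pow 2
    have h3 : HasDerivAt (fun y => y^(n-2)*(V y)^2) _ x := h1.mul h2
    convert h3 using 1
    have e1 : ((n-2:ℕ):ℝ) = (n:ℝ)-2 := by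
      rw [Nat.cast_sub (by omega : 2 ≤ n)]; norm_num
    have e2 : n-2-1 = n-3 := by omega
    rw [e1, e2]
    norm_num
    ring
  have hFdm : AEStronglyMeasurable
      (fun x => ((n:ℝ)-2)*x^(n-3)*(V x)^2 + 2*x^(n-2)*(V x*V' x))
      (volume.restrict (Ioo a b)) := by
    refine AEStronglyMeasurable.add ?_ ?_
    · exact (aestronglyMeasurable_const.mul (continuous_pow (n-3)).aestronglyMeasurable).mul hV2m
    · exact (aestronglyMeasurable_const.mul (continuous_pow (n-2)).aestronglyMeasurable).mul
        (hVm.mul hV'm)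
  have hFdbound : ∀ x ∈ Ioo a b,
      |((n:ℝ)-2)*x^(n-3)*(V x)^2 + 2*x^(n-2)*(V x*V' x)| ≤
        x ^ (n - 1 : ℕ) * (V' x) ^ 2 + ((n:ℝ)-1)*(x^(n-3)*(V x)^2) := by
    intro x hx
    have hx0 : 0 < x := lt_trans ha hx.1
    have hamgm := aux_amgm hn x (V' x) (V x) hx0.le
    calc |((n:ℝ)-2)*x^(n-3)*(V x)^2 + 2*x^(n-2)*(V x*V' x)|
        ≤ |((n:ℝ)-2)*x^(n-3)*(V x)^2| + |2*x^(n-2)*(V x*V' x)| := abs_add_le _ _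
      _ = ((n:ℝ)-2)*x^(n-3)*(V x)^2 + 2*(x^(n-2)*|V x*V' x|) := by
          rw [abs_of_nonneg (mul_nonneg (mul_nonneg (by linarith : (0:ℝ) ≤ (n:ℝ)-2) (pow_nonneg hx0.le _)) (sq_nonneg _)), abs_mul,
            abs_mul, abs_two, abs_of_nonneg (pow_nonneg hx0.le (n-2))]
          ring
      _ ≤ ((n:ℝ)-2)*x^(n-3)*(V x)^2 + (x^(n-1)*(V' x)^2 + x^(n-3)*(V x)^2) := by linarith
      _ = x ^ (n - 1 : ℕ) * (V' x) ^ 2 + ((n:ℝ)-1)*(x^(n-3)*(V x)^2) := by ring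
  have hFdint : IntegrableOn
      (fun x => ((n:ℝ)-2)*x^(n-3)*(V x)^2 + 2*x^(n-2)*(V x*V' x)) (Ioo a b) := by
    refine Integrable.mono' (hA.add (hq2int.const_mul ((n:ℝ)-1))) hFdm ?_
    rw [ae_restrict_iff' measurableSet_Ioo]
    refine Filter.Eventually.of_forall fun x hx => ?_
    rw [Real.norm_eq_abs]
    exact hFdbound x hx
  -- FTC on [a,b]
  have hftc : (∫ x in Ioo a b, (((n:ℝ)-2)*x^(n-3)*(V x)^2 + 2*x^(n-2)*(V x*V' x)))
      = b^(n-2)*(V b)^2 - a^(n-2)*(V a)^2 := by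
    have hii : IntervalIntegrable
        (fun x => ((n:ℝ)-2)*x^(n-3)*(V x)^2 + 2*x^(n-2)*(V x*V' x)) volume a b := by
      rw [intervalIntegrable_iff, uIoc_of_le hab.le]
      exact (integrableOn_Ioc_iff_integrableOn_Ioo).2 hFdint
    have h := intervalIntegral.integral_eq_sub_of_hasDerivAt
      (f := fun y => y^(n-2)*(V y)^2)
      (fun x hx => hFD x (by rwa [uIcc_of_le hab.le] at hx)) hii
    rw [intervalIntegral.integral_of_le hab.le, integral_Ioc_eq_integral_Ioo] at h
    exact h
  -- nonnegativity
  have hIA0 : 0 ≤ ∫ x in Ioo a b, x ^ (n - 1 : ℕ) * (V' x) ^ 2 := by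
    refine setIntegral_nonneg measurableSet_Ioo fun x hx => ?_
    have hx0 : 0 < x := lt_trans ha hx.1
    positivity
  have hIB0 : 0 ≤ ∫ x in Ioo a b, x ^ (n - 1 : ℕ) * (V x) ^ 2 := by
    refine setIntegral_nonneg measurableSet_Ioo fun x hx => ?_
    have hx0 : 0 < x := lt_trans ha hx.1
    positivity
  have hX0 : 0 ≤ ∫ x in Ioo a b, x^(n-3)*(V x)^2 := by
    refine setIntegral_nonneg measurableSet_Ioo fun x hx => ?_
    have hx0 : 0 < x := lt_trans ha hx.1
    positivity
  -- Hardy-type bound for X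
  have hXbound : (∫ x in Ioo a b, x^(n-3)*(V x)^2)
      ≤ 2*(b^(n-2)*(V b)^2) + 4*(∫ x in Ioo a b, x ^ (n - 1 : ℕ) * (V' x) ^ 2) := by
    have hptw : ∀ x ∈ Ioo a b, (1/2)*(x^(n-3)*(V x)^2) ≤
        (((n:ℝ)-2)*x^(n-3)*(V x)^2 + 2*x^(n-2)*(V x*V' x)) + 2*(x ^ (n - 1 : ℕ) * (V' x) ^ 2) := by
      intro x hx
      have hx0 : 0 < x := lt_trans ha hx.1
      have := aux_keylow hn x (V x) (V' x) hx0.le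
      linarith
    have hi1 : IntegrableOn (fun x => (1/2)*(x^(n-3)*(V x)^2)) (Ioo a b) :=
      hq2int.const_mul _
    have hi2 : IntegrableOn (fun x =>
        (((n:ℝ)-2)*x^(n-3)*(V x)^2 + 2*x^(n-2)*(V x*V' x)) + 2*(x ^ (n - 1 : ℕ) * (V' x) ^ 2))
        (Ioo a b) := hFdint.add (hA.const_mul 2)
    have hmono := setIntegral_mono_on hi1 hi2 measurableSet_Ioo hptw
    rw [integral_const_mul] at hmono
    have hsplit : (∫ x in Ioo a b,
        ((((n:ℝ)-2)*x^(n-3)*(V x)^2 + 2*x^(n-2)*(V x*V' x)) + 2*(x ^ (n - 1 : ℕ) * (V' x) ^ 2)))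
        = (b^(n-2)*(V b)^2 - a^(n-2)*(V a)^2)
          + 2*(∫ x in Ioo a b, x ^ (n - 1 : ℕ) * (V' x) ^ 2) := by
      rw [integral_add hFdint (hA.const_mul 2), hftc, integral_const_mul]
    rw [hsplit] at hmono
    have hFa : 0 ≤ a^(n-2)*(V a)^2 := by positivity
    linarith
  have hFc : ContinuousOn (fun y => y^(n-2)*(V y)^2) (Icc a b) :=
    ((continuous_pow (n-2)).continuousOn).mul (hVc.pow 2)
  have hFint : IntegrableOn (fun y => y^(n-2)*(V y)^2) (Icc a b) := hFc.integrableOn_Icc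
  have hq1nn : 0 ≤ᵐ[volume.restrict (Ioo a b)] fun x => x ^ (n - 1 : ℕ) * (V' x) ^ 2 := by
    filter_upwards [ae_restrict_mem measurableSet_Ioo] with x hx
    simp only [Pi.zero_apply]
    have hx0 : 0 < x := lt_trans ha hx.1
    positivity
  have hq2n1nn : 0 ≤ᵐ[volume.restrict (Ioo a b)] fun x => x ^ (n - 1 : ℕ) * (V x) ^ 2 := by
    filter_upwards [ae_restrict_mem measurableSet_Ioo] with x hx
    simp only [Pi.zero_apply]
    have hx0 : 0 < x := lt_trans ha hx.1
    positivity
  have hq2nn : 0 ≤ᵐ[volume.restrict (Ioo a b)] fun x => x^(n-3)*(V x)^2 := by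
    filter_upwards [ae_restrict_mem measurableSet_Ioo] with x hx
    simp only [Pi.zero_apply]
    have hx0 : 0 < x := lt_trans ha hx.1
    positivity
  have case1 : ∀ s ∈ Icc a b, b - a ≤ 2*s →
      s^(n-2)*(V s)^2 ≤ (∫ x in Ioo a b, x ^ (n - 1 : ℕ) * (V' x) ^ 2)
        + 16*(n:ℝ)/(b-a)^2*(∫ x in Ioo a b, x ^ (n - 1 : ℕ) * (V x) ^ 2) := by
    intro s hs hs2
    have hs0 : 0 < s := lt_of_lt_of_le ha hs.1
    set c := max a (s/2) with hc
    set d := min b (2*s) with hd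
    have hac : a ≤ c := le_max_left _ _
    have hcs : c ≤ s := max_le hs.1 (by linarith)
    have hsd : s ≤ d := le_min hs.2 (by linarith)
    have hdb : d ≤ b := min_le_left _ _
    have hcd : c < d := lt_min (max_lt hab (by linarith)) (max_lt (by linarith) (by linarith))
    have hcge : (b-a)/4 ≤ c := le_max_of_le_right (by linarith)
    have hdcge : (b-a)/4 ≤ d - c := by
      rcases max_choice a (s/2) with h1 | h1 <;> rcases min_choice b (2*s) with h2 | h2 <;>
        rw [hc, hd, h1, h2] <;> linarith [hs.1, hs.2]
    have hJsub : Ioo c d ⊆ Ioo a b := Ioo_subset_Ioo hac hdb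
    have hIccsub : Icc c d ⊆ Icc a b := Icc_subset_Icc hac hdb
    have havg : s^(n-2)*(V s)^2 ≤
        (d - c)⁻¹ * (∫ t in Ioo c d, t^(n-2)*(V t)^2)
          + ∫ x in Ioo c d, |((n:ℝ)-2)*x^(n-3)*(V x)^2 + 2*x^(n-2)*(V x*V' x)| :=
      avg_bound (fun y => y^(n-2)*(V y)^2) _ hcd (fun x hx => hFD x (hIccsub hx))
        (((integrableOn_Icc_iff_integrableOn_Ioo).2 hFdint).mono_set hIccsub) ⟨hcs, hsd⟩
    have hT2 : (∫ x in Ioo c d, |((n:ℝ)-2)*x^(n-3)*(V x)^2 + 2*x^(n-2)*(V x*V' x)|)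
        ≤ (∫ x in Ioo a b, x ^ (n - 1 : ℕ) * (V' x) ^ 2)
          + 16*((n:ℝ)-1)/(b-a)^2*(∫ x in Ioo a b, x ^ (n - 1 : ℕ) * (V x) ^ 2) := by
      have hptw : ∀ x ∈ Ioo c d,
          |((n:ℝ)-2)*x^(n-3)*(V x)^2 + 2*x^(n-2)*(V x*V' x)| ≤
            x ^ (n - 1 : ℕ) * (V' x) ^ 2 + 16*((n:ℝ)-1)/(b-a)^2*(x ^ (n - 1 : ℕ) * (V x) ^ 2) := by
        intro x hx
        have hx0 : 0 < x := lt_trans ha (hJsub hx).1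
        have h1 := hFdbound x (hJsub hx)
        have h2 := aux_wt1 hn (b-a) x (V x) hL (le_trans hcge hx.1.le) hx0
        have h3 := mul_le_mul_of_nonneg_left h2 (by linarith : (0:ℝ) ≤ (n:ℝ)-1)
        have h4 : ((n:ℝ)-1)*(16/(b-a)^2*(x^(n-1)*(V x)^2))
            = 16*((n:ℝ)-1)/(b-a)^2*(x^(n-1)*(V x)^2) := by ring
        rw [h4] at h3
        linarith
      have hg2 : IntegrableOn (fun x =>
          x ^ (n - 1 : ℕ) * (V' x) ^ 2 + 16*((n:ℝ)-1)/(b-a)^2*(x ^ (n - 1 : ℕ) * (V x) ^ 2))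
          (Ioo c d) :=
        (hA.mono_set hJsub).add ((hB.mono_set hJsub).const_mul (16*((n:ℝ)-1)/(b-a)^2))
      have hg1 : IntegrableOn (fun x =>
          |((n:ℝ)-2)*x^(n-3)*(V x)^2 + 2*x^(n-2)*(V x*V' x)|) (Ioo c d) :=
        (hFdint.mono_set hJsub).abs
      have hmono := setIntegral_mono_on hg1 hg2 measurableSet_Ioo hptw
      have hsplit : (∫ x in Ioo c d,
          (x ^ (n - 1 : ℕ) * (V' x) ^ 2 + 16*((n:ℝ)-1)/(b-a)^2*(x ^ (n - 1 : ℕ) * (V x) ^ 2)))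
          = (∫ x in Ioo c d, x ^ (n - 1 : ℕ) * (V' x) ^ 2)
            + 16*((n:ℝ)-1)/(b-a)^2*(∫ x in Ioo c d, x ^ (n - 1 : ℕ) * (V x) ^ 2) := by
        rw [integral_add (hA.mono_set hJsub) ((hB.mono_set hJsub).const_mul _),
          integral_const_mul]
      rw [hsplit] at hmono
      have hm1 : (∫ x in Ioo c d, x ^ (n - 1 : ℕ) * (V' x) ^ 2)
          ≤ ∫ x in Ioo a b, x ^ (n - 1 : ℕ) * (V' x) ^ 2 :=
        setIntegral_mono_set hA hq1nn (HasSubset.Subset.eventuallyLE hJsub)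
      have hm2 : (∫ x in Ioo c d, x ^ (n - 1 : ℕ) * (V x) ^ 2)
          ≤ ∫ x in Ioo a b, x ^ (n - 1 : ℕ) * (V x) ^ 2 :=
        setIntegral_mono_set hB hq2n1nn (HasSubset.Subset.eventuallyLE hJsub)
      have hk0 : (0:ℝ) ≤ 16*((n:ℝ)-1)/(b-a)^2 := by
        have : (0:ℝ) ≤ (n:ℝ)-1 := by linarith
        positivity
      have hm3 := mul_le_mul_of_nonneg_left hm2 hk0
      linarith
    have hFJ : (∫ t in Ioo c d, t^(n-2)*(V t)^2)
        ≤ 4/(b-a)*(∫ x in Ioo a b, x ^ (n - 1 : ℕ) * (V x) ^ 2) := by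
      have hptw : ∀ x ∈ Ioo c d, x^(n-2)*(V x)^2 ≤ 4/(b-a)*(x ^ (n - 1 : ℕ) * (V x) ^ 2) :=
        fun x hx => aux_wt2 hn (b-a) x (V x) hL (le_trans hcge hx.1.le)
          (lt_trans ha (hJsub hx).1)
      have hg2 : IntegrableOn (fun x => 4/(b-a)*(x ^ (n - 1 : ℕ) * (V x) ^ 2)) (Ioo c d) :=
        (hB.mono_set hJsub).const_mul (4/(b-a))
      have hg1 : IntegrableOn (fun y => y^(n-2)*(V y)^2) (Ioo c d) :=
        hFint.mono_set (hJsub.trans Ioo_subset_Icc_self)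
      have hmono := setIntegral_mono_on hg1 hg2 measurableSet_Ioo hptw
      rw [integral_const_mul] at hmono
      have hm2 : (∫ x in Ioo c d, x ^ (n - 1 : ℕ) * (V x) ^ 2)
          ≤ ∫ x in Ioo a b, x ^ (n - 1 : ℕ) * (V x) ^ 2 :=
        setIntegral_mono_set hB hq2n1nn (HasSubset.Subset.eventuallyLE hJsub)
      have h4L : (0:ℝ) ≤ 4/(b-a) := by positivity
      calc (∫ t in Ioo c d, t^(n-2)*(V t)^2)
          ≤ 4/(b-a)*(∫ x in Ioo c d, x ^ (n - 1 : ℕ) * (V x) ^ 2) := hmono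
        _ ≤ 4/(b-a)*(∫ x in Ioo a b, x ^ (n - 1 : ℕ) * (V x) ^ 2) :=
            mul_le_mul_of_nonneg_left hm2 h4L
    have hdcinv : (d-c)⁻¹ ≤ 4/(b-a) := by
      have h0 : (0:ℝ) < (b-a)/4 := by positivity
      have h1 : (d-c)⁻¹ ≤ ((b-a)/4)⁻¹ := by
        apply inv_anti₀ h0 hdcge
      rwa [inv_div] at h1
    have hFJ0 : 0 ≤ ∫ t in Ioo c d, t^(n-2)*(V t)^2 := by
      refine setIntegral_nonneg measurableSet_Ioo fun x hx => ?_
      have hx0 : 0 < x := lt_trans ha (hJsub hx).1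
      positivity
    have hT1 : (d-c)⁻¹ * (∫ t in Ioo c d, t^(n-2)*(V t)^2)
        ≤ 4/(b-a)*(4/(b-a)*(∫ x in Ioo a b, x ^ (n - 1 : ℕ) * (V x) ^ 2)) := by
      refine mul_le_mul hdcinv hFJ hFJ0 (by positivity)
    have hfin : 4/(b-a)*(4/(b-a)*(∫ x in Ioo a b, x ^ (n - 1 : ℕ) * (V x) ^ 2))
        + ((∫ x in Ioo a b, x ^ (n - 1 : ℕ) * (V' x) ^ 2)
          + 16*((n:ℝ)-1)/(b-a)^2*(∫ x in Ioo a b, x ^ (n - 1 : ℕ) * (V x) ^ 2))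
        = (∫ x in Ioo a b, x ^ (n - 1 : ℕ) * (V' x) ^ 2)
          + 16*(n:ℝ)/(b-a)^2*(∫ x in Ioo a b, x ^ (n - 1 : ℕ) * (V x) ^ 2) := by
      field_simp
      ring
    linarith
  have hFb : b^(n-2)*(V b)^2 ≤ (∫ x in Ioo a b, x ^ (n - 1 : ℕ) * (V' x) ^ 2)
      + 16*(n:ℝ)/(b-a)^2*(∫ x in Ioo a b, x ^ (n - 1 : ℕ) * (V x) ^ 2) :=
    case1 b ⟨hab.le, le_refl b⟩ (by linarith)
  have case2 : ∀ s ∈ Icc a b, 2*s ≤ b - a →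
      s^(n-2)*(V s)^2 ≤ (∫ x in Ioo a b, x ^ (n - 1 : ℕ) * (V' x) ^ 2)
        + ((n:ℝ)+3)*(∫ x in Ioo a b, x^(n-3)*(V x)^2) := by
    intro s hs hs2
    have hs0 : 0 < s := lt_of_lt_of_le ha hs.1
    set c := max a (s/2) with hc
    set d := min b (2*s) with hd
    have hac : a ≤ c := le_max_left _ _
    have hcs : c ≤ s := max_le hs.1 (by linarith)
    have hsd : s ≤ d := le_min hs.2 (by linarith)
    have hdb : d ≤ b := min_le_left _ _
    have hcd : c < d := lt_min (max_lt hab (by linarith)) (max_lt (by linarith) (by linarith))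
    have hdle : d ≤ 2*s := min_le_right _ _
    have hdcge : s/2 ≤ d - c := by
      rcases max_choice a (s/2) with h1 | h1 <;> rcases min_choice b (2*s) with h2 | h2 <;>
        rw [hc, hd, h1, h2] <;> linarith [hs.1, hs.2]
    have hJsub : Ioo c d ⊆ Ioo a b := Ioo_subset_Ioo hac hdb
    have hIccsub : Icc c d ⊆ Icc a b := Icc_subset_Icc hac hdb
    have havg : s^(n-2)*(V s)^2 ≤
        (d - c)⁻¹ * (∫ t in Ioo c d, t^(n-2)*(V t)^2)
          + ∫ x in Ioo c d, |((n:ℝ)-2)*x^(n-3)*(V x)^2 + 2*x^(n-2)*(V x*V' x)| :=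
      avg_bound (fun y => y^(n-2)*(V y)^2) _ hcd (fun x hx => hFD x (hIccsub hx))
        (((integrableOn_Icc_iff_integrableOn_Ioo).2 hFdint).mono_set hIccsub) ⟨hcs, hsd⟩
    have hT2 : (∫ x in Ioo c d, |((n:ℝ)-2)*x^(n-3)*(V x)^2 + 2*x^(n-2)*(V x*V' x)|)
        ≤ (∫ x in Ioo a b, x ^ (n - 1 : ℕ) * (V' x) ^ 2)
          + ((n:ℝ)-1)*(∫ x in Ioo a b, x^(n-3)*(V x)^2) := by
      have hg2 : IntegrableOn (fun x =>
          x ^ (n - 1 : ℕ) * (V' x) ^ 2 + ((n:ℝ)-1)*(x^(n-3)*(V x)^2)) (Ioo c d) :=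
        (hA.mono_set hJsub).add ((hq2int.mono_set hJsub).const_mul ((n:ℝ)-1))
      have hg1 : IntegrableOn (fun x =>
          |((n:ℝ)-2)*x^(n-3)*(V x)^2 + 2*x^(n-2)*(V x*V' x)|) (Ioo c d) :=
        (hFdint.mono_set hJsub).abs
      have hmono := setIntegral_mono_on hg1 hg2 measurableSet_Ioo
        (fun x hx => hFdbound x (hJsub hx))
      have hsplit : (∫ x in Ioo c d,
          (x ^ (n - 1 : ℕ) * (V' x) ^ 2 + ((n:ℝ)-1)*(x^(n-3)*(V x)^2)))
          = (∫ x in Ioo c d, x ^ (n - 1 : ℕ) * (V' x) ^ 2)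
            + ((n:ℝ)-1)*(∫ x in Ioo c d, x^(n-3)*(V x)^2) := by
        rw [integral_add (hA.mono_set hJsub) ((hq2int.mono_set hJsub).const_mul _),
          integral_const_mul]
      rw [hsplit] at hmono
      have hm1 : (∫ x in Ioo c d, x ^ (n - 1 : ℕ) * (V' x) ^ 2)
          ≤ ∫ x in Ioo a b, x ^ (n - 1 : ℕ) * (V' x) ^ 2 :=
        setIntegral_mono_set hA hq1nn (HasSubset.Subset.eventuallyLE hJsub)
      have hm2 : (∫ x in Ioo c d, x^(n-3)*(V x)^2)
          ≤ ∫ x in Ioo a b, x^(n-3)*(V x)^2 :=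
        setIntegral_mono_set hq2int hq2nn (HasSubset.Subset.eventuallyLE hJsub)
      have hm3 := mul_le_mul_of_nonneg_left hm2 (by linarith : (0:ℝ) ≤ (n:ℝ)-1)
      linarith
    have hFJ : (∫ t in Ioo c d, t^(n-2)*(V t)^2)
        ≤ 2*s*(∫ x in Ioo a b, x^(n-3)*(V x)^2) := by
      have hptw : ∀ x ∈ Ioo c d, x^(n-2)*(V x)^2 ≤ 2*s*(x^(n-3)*(V x)^2) :=
        fun x hx => aux_wt3 hn s x (V x) (lt_trans ha (hJsub hx).1)
          (le_trans hx.2.le hdle)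
      have hg2 : IntegrableOn (fun x => 2*s*(x^(n-3)*(V x)^2)) (Ioo c d) :=
        (hq2int.mono_set hJsub).const_mul _
      have hg1 : IntegrableOn (fun y => y^(n-2)*(V y)^2) (Ioo c d) :=
        hFint.mono_set (hJsub.trans Ioo_subset_Icc_self)
      have hmono := setIntegral_mono_on hg1 hg2 measurableSet_Ioo hptw
      rw [integral_const_mul] at hmono
      have hm2 : (∫ x in Ioo c d, x^(n-3)*(V x)^2)
          ≤ ∫ x in Ioo a b, x^(n-3)*(V x)^2 :=
        setIntegral_mono_set hq2int hq2nn (HasSubset.Subset.eventuallyLE hJsub)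
      calc (∫ t in Ioo c d, t^(n-2)*(V t)^2)
          ≤ 2*s*(∫ x in Ioo c d, x^(n-3)*(V x)^2) := hmono
        _ ≤ 2*s*(∫ x in Ioo a b, x^(n-3)*(V x)^2) :=
            mul_le_mul_of_nonneg_left hm2 (by linarith)
    have hdcinv : (d-c)⁻¹ ≤ 2/s := by
      have h0 : (0:ℝ) < s/2 := by linarith
      have h1 : (d-c)⁻¹ ≤ (s/2)⁻¹ := inv_anti₀ h0 hdcge
      rwa [inv_div] at h1
    have hFJ0 : 0 ≤ ∫ t in Ioo c d, t^(n-2)*(V t)^2 := by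
      refine setIntegral_nonneg measurableSet_Ioo fun x hx => ?_
      have hx0 : 0 < x := lt_trans ha (hJsub hx).1
      positivity
    have hT1 : (d-c)⁻¹ * (∫ t in Ioo c d, t^(n-2)*(V t)^2)
        ≤ 2/s*(2*s*(∫ x in Ioo a b, x^(n-3)*(V x)^2)) :=
      mul_le_mul hdcinv hFJ hFJ0 (by positivity)
    have he : 2/s*(2*s*(∫ x in Ioo a b, x^(n-3)*(V x)^2))
        = 4*(∫ x in Ioo a b, x^(n-3)*(V x)^2) := by
      field_simp
      ring
    rw [he] at hT1
    linarith
  -- combine the two cases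
  intro s hs
  have hr0 : (0:ℝ) ≤ (b-a)⁻¹ := by positivity
  have hn0 : (0:ℝ) ≤ (n:ℝ) := by positivity
  have he : 16*(n:ℝ)/(b-a)^2 = 16*(n:ℝ)*((b-a)⁻¹*(b-a)⁻¹) := by
    rw [div_eq_mul_inv, sq, mul_inv]
  have hrr0 : (0:ℝ) ≤ (b-a)⁻¹*(b-a)⁻¹ := mul_nonneg hr0 hr0
  have hnsq : (0:ℝ) ≤ (n:ℝ)^2 := sq_nonneg _
  have hK1 : (1:ℝ) ≤ 32*(n:ℝ)^2+96*(n:ℝ)+19 := by linarith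
  have hK16 : 16*(n:ℝ) ≤ 32*(n:ℝ)^2+96*(n:ℝ)+19 := by linarith
  have hK619 : 6*(n:ℝ)+19 ≤ 32*(n:ℝ)^2+96*(n:ℝ)+19 := by linarith
  have hK32 : 32*(n:ℝ)^2+96*(n:ℝ) ≤ 32*(n:ℝ)^2+96*(n:ℝ)+19 := by linarith
  have hexp : (32*(n:ℝ)^2+96*(n:ℝ)+19) * ((∫ x in Ioo a b, x ^ (n - 1 : ℕ) * (V' x) ^ 2)
        + (b-a)⁻¹*(b-a)⁻¹ * (∫ x in Ioo a b, x ^ (n - 1 : ℕ) * (V x) ^ 2))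
      = (32*(n:ℝ)^2+96*(n:ℝ)+19) * (∫ x in Ioo a b, x ^ (n - 1 : ℕ) * (V' x) ^ 2)
        + (32*(n:ℝ)^2+96*(n:ℝ)+19) * ((b-a)⁻¹*(b-a)⁻¹)
          * (∫ x in Ioo a b, x ^ (n - 1 : ℕ) * (V x) ^ 2) := by ring
  rcases le_total (b - a) (2*s) with h | h
  · have h1 := case1 s hs h
    rw [he] at h1
    have e1 : (∫ x in Ioo a b, x ^ (n - 1 : ℕ) * (V' x) ^ 2)
        ≤ (32*(n:ℝ)^2+96*(n:ℝ)+19) * (∫ x in Ioo a b, x ^ (n - 1 : ℕ) * (V' x) ^ 2) :=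
      le_mul_of_one_le_left hIA0 hK1
    have e2 : 16*(n:ℝ)*((b-a)⁻¹*(b-a)⁻¹)*(∫ x in Ioo a b, x ^ (n - 1 : ℕ) * (V x) ^ 2)
        ≤ (32*(n:ℝ)^2+96*(n:ℝ)+19)*((b-a)⁻¹*(b-a)⁻¹)
          *(∫ x in Ioo a b, x ^ (n - 1 : ℕ) * (V x) ^ 2) :=
      mul_le_mul_of_nonneg_right (mul_le_mul_of_nonneg_right hK16 hrr0) hIB0
    linarith
  · have h1 := case2 s hs h
    rw [he] at hFb
    have h2 : (∫ x in Ioo a b, x^(n-3)*(V x)^2)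
        ≤ 6*(∫ x in Ioo a b, x ^ (n - 1 : ℕ) * (V' x) ^ 2)
          + 32*(n:ℝ)*((b-a)⁻¹*(b-a)⁻¹)*(∫ x in Ioo a b, x ^ (n - 1 : ℕ) * (V x) ^ 2) := by
      linarith
    have h3 := mul_le_mul_of_nonneg_left h2 (by linarith : (0:ℝ) ≤ (n:ℝ)+3)
    have e3 : ((n:ℝ)+3)*(6*(∫ x in Ioo a b, x ^ (n - 1 : ℕ) * (V' x) ^ 2)
          + 32*(n:ℝ)*((b-a)⁻¹*(b-a)⁻¹)*(∫ x in Ioo a b, x ^ (n - 1 : ℕ) * (V x) ^ 2))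
        = (6*(n:ℝ)+18)*(∫ x in Ioo a b, x ^ (n - 1 : ℕ) * (V' x) ^ 2)
          + (32*(n:ℝ)^2+96*(n:ℝ))*((b-a)⁻¹*(b-a)⁻¹)
            *(∫ x in Ioo a b, x ^ (n - 1 : ℕ) * (V x) ^ 2) := by ring
    rw [e3] at h3
    have e1 : (6*(n:ℝ)+19)*(∫ x in Ioo a b, x ^ (n - 1 : ℕ) * (V' x) ^ 2)
        ≤ (32*(n:ℝ)^2+96*(n:ℝ)+19) * (∫ x in Ioo a b, x ^ (n - 1 : ℕ) * (V' x) ^ 2) :=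
      mul_le_mul_of_nonneg_right hK619 hIA0
    have e2 : (32*(n:ℝ)^2+96*(n:ℝ))*((b-a)⁻¹*(b-a)⁻¹)
          *(∫ x in Ioo a b, x ^ (n - 1 : ℕ) * (V x) ^ 2)
        ≤ (32*(n:ℝ)^2+96*(n:ℝ)+19)*((b-a)⁻¹*(b-a)⁻¹)
          *(∫ x in Ioo a b, x ^ (n - 1 : ℕ) * (V x) ^ 2) :=
      mul_le_mul_of_nonneg_right (mul_le_mul_of_nonneg_right hK32 hrr0) hIB0
    linarith


/-- Lemma (Hardy-type estimate on an interval): for a bounded interval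
`I = Ioo a b ⊆ (0,∞)`, `n ≥ 3`, and `V ∈ H¹(I)` (realized by an absolutely
continuous representative with derivative `V'`),
`sup_{s∈I} s^{n/2-1}|V(s)| ≤ C ((∫ s^{n-1}|V'|²)^{1/2} + |I|⁻¹ (∫ s^{n-1}|V|²)^{1/2})`
with `C = C(n)` independent of `I` and `V`. -/
theorem stmt_0 (n : ℕ) (hn : 3 ≤ n) :
    ∃ C > (0:ℝ), ∀ (a b : ℝ), 0 < a → a < b →
      ∀ V V' : ℝ → ℝ,
        (∀ x ∈ Icc a b, HasDerivAt V (V' x) x) →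
        IntegrableOn (fun s => s ^ (n - 1 : ℕ) * (V' s) ^ 2) (Ioo a b) →
        IntegrableOn (fun s => s ^ (n - 1 : ℕ) * (V s) ^ 2) (Ioo a b) →
        ∀ s ∈ Ioo a b,
          s ^ ((n : ℝ) / 2 - 1) * |V s| ≤
            C * ((∫ x in Ioo a b, x ^ (n - 1 : ℕ) * (V' x) ^ 2) ^ (1/2 : ℝ)
              + (b - a)⁻¹ * (∫ x in Ioo a b, x ^ (n - 1 : ℕ) * (V x) ^ 2) ^ (1/2 : ℝ)) := by
  have hn3 : (3:ℝ) ≤ (n:ℝ) := by exact_mod_cast hn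
  have hK0 : (0:ℝ) < 32*(n:ℝ)^2+96*(n:ℝ)+19 := by positivity
  refine ⟨Real.sqrt (32*(n:ℝ)^2+96*(n:ℝ)+19), Real.sqrt_pos.2 hK0, ?_⟩
  intro a b ha hab V V' hV hA hB s hs
  have hL : 0 < b - a := by linarith [hs.1, hs.2]
  have hs0 : 0 < s := lt_trans ha hs.1
  have hcore := core n hn a b ha hab V V' hV hA hB s (Ioo_subset_Icc_self hs)
  have hIA0 : 0 ≤ ∫ x in Ioo a b, x ^ (n - 1 : ℕ) * (V' x) ^ 2 := by
    refine setIntegral_nonneg measurableSet_Ioo fun x hx => ?_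
    have hx0 : 0 < x := lt_trans ha hx.1
    positivity
  have hIB0 : 0 ≤ ∫ x in Ioo a b, x ^ (n - 1 : ℕ) * (V x) ^ 2 := by
    refine setIntegral_nonneg measurableSet_Ioo fun x hx => ?_
    have hx0 : 0 < x := lt_trans ha hx.1
    positivity
  have hsq : (s ^ ((n:ℝ)/2-1) * |V s|)^2 = s^(n-2) * (V s)^2 := by
    rw [mul_pow, sq_abs]
    congr 1
    rw [← Real.rpow_natCast (s ^ ((n:ℝ)/2-1)) 2, ← Real.rpow_mul hs0.le,
      ← Real.rpow_natCast s (n-2)]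
    congr 1
    push_cast [Nat.cast_sub (by omega : 2 ≤ n)]
    ring
  set IA := ∫ x in Ioo a b, x ^ (n - 1 : ℕ) * (V' x) ^ 2 with hIAdef
  set IB := ∫ x in Ioo a b, x ^ (n - 1 : ℕ) * (V x) ^ 2 with hIBdef
  have key2 : (s ^ ((n:ℝ)/2-1) * |V s|)^2 ≤
      (Real.sqrt (32*(n:ℝ)^2+96*(n:ℝ)+19)
        * (Real.sqrt IA + (b-a)⁻¹ * Real.sqrt IB))^2 := by
    rw [hsq]
    have hexp : (Real.sqrt (32*(n:ℝ)^2+96*(n:ℝ)+19)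
          * (Real.sqrt IA + (b-a)⁻¹ * Real.sqrt IB))^2
        = (32*(n:ℝ)^2+96*(n:ℝ)+19)
            * (IA + (b-a)⁻¹*(b-a)⁻¹*IB)
          + (32*(n:ℝ)^2+96*(n:ℝ)+19)
            * (2*(b-a)⁻¹*(Real.sqrt IA * Real.sqrt IB)) := by
      rw [mul_pow, add_sq, mul_pow]
      rw [Real.sq_sqrt hK0.le, Real.sq_sqrt hIA0, Real.sq_sqrt hIB0]
      ring
    rw [hexp]
    have hpos : 0 ≤ (32*(n:ℝ)^2+96*(n:ℝ)+19)
        * (2*(b-a)⁻¹*(Real.sqrt IA * Real.sqrt IB)) := by positivity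
    linarith
  have hL1 : 0 ≤ s ^ ((n:ℝ)/2-1) * |V s| :=
    mul_nonneg (Real.rpow_nonneg hs0.le _) (abs_nonneg _)
  have hR1 : 0 ≤ Real.sqrt (32*(n:ℝ)^2+96*(n:ℝ)+19)
      * (Real.sqrt IA + (b-a)⁻¹ * Real.sqrt IB) := by positivity
  have hfin := Real.sqrt_le_sqrt key2
  rw [Real.sqrt_sq hL1, Real.sqrt_sq hR1] at hfin
  rw [← Real.sqrt_eq_rpow, ← Real.sqrt_eq_rpow]
  exact hfin
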